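/- Suppose η_n → 0, √n·η_n → ∞, and θ_n/η_n → ζ with 1 < |ζ|. Then the distribution of √n(θ̂_H − θ_n) under P_{n,θ_n} converges in total variation to the standard normal distribution. -/

import Mathlib

open MeasureTheory ProbabilityTheory Real Filter Topology Set

noncomputable def stdGauss : Measure ℝ := gaussianReal 0 1

/-- Standard normal cdf. -/
noncomputable def Phi (x : ℝ) : ℝ := (stdGauss (Set.Iic x)).toReal

/-- Standard normal density. -/
noncomputable def phi (x : ℝ) : ℝ := gaussianPDFReal 0 1 x

/-- Hard-thresholding estimator. -/
noncomputable def hardThresh (η y : ℝ) : ℝ := if η < |y| then y else 0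

/-- Soft-thresholding (LASSO) estimator. -/
noncomputable def softThresh (η y : ℝ) : ℝ := Real.sign y * max (|y| - η) 0

/-- SCAD estimator. -/
noncomputable def scadThresh (a η y : ℝ) : ℝ :=
  if |y| ≤ 2 * η then Real.sign y * max (|y| - η) 0
  else if |y| ≤ a * η then ((a - 1) * y - Real.sign y * a * η) / (a - 2)
  else y

instance : IsProbabilityMeasure stdGauss := by unfold stdGauss; infer_instance

lemma hardThresh_measurable (c : ℝ) : Measurable (hardThresh c) := by
  unfold hardThresh
  exact Measurable.ite (measurableSet_lt measurable_const measurable_abs)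
    measurable_id measurable_const

lemma gauss_tail {t : ℕ → ℝ} (ht : Tendsto t atTop atTop) :
    Tendsto (fun n => (stdGauss {z : ℝ | t n ≤ |z|}).toReal) atTop (𝓝 0) := by
  have h1 : Tendsto (fun r : ℝ => stdGauss {z : ℝ | r ≤ |z|}) atTop (𝓝 0) := by
    have h2 : Tendsto (stdGauss ∘ fun r : ℝ => {z : ℝ | r ≤ |z|}) atTop
        (𝓝 (stdGauss (⋂ r : ℝ, {z : ℝ | r ≤ |z|}))) := by
      apply tendsto_measure_iInter_atTop
      · intro r
        exact ((isClosed_le continuous_const continuous_abs)).measurableSet.nullMeasurableSet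
      · intro a b hab
        exact fun z hz => le_trans hab hz
      · exact ⟨0, measure_ne_top _ _⟩
    have he : (⋂ r : ℝ, {z : ℝ | r ≤ |z|}) = ∅ := by
      ext z
      simp only [mem_iInter, mem_setOf_eq, mem_empty_iff_false, iff_false, not_forall, not_le]
      exact ⟨|z| + 1, by linarith⟩
    rw [he] at h2; simpa [Function.comp_def] using h2
  exact (ENNReal.tendsto_toReal (by simp)).comp (h1.comp ht)

/-- TV-type bound: if `f = id` off a set `T`, the pushforward is close to the original. -/
lemma tv_bound {f : ℝ → ℝ} (hf : Measurable f) {T : Set ℝ}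
    (hT : ∀ z, z ∉ T → f z = z) {s : Set ℝ} (hs : MeasurableSet s) :
    |((Measure.map f stdGauss) s).toReal - (stdGauss s).toReal|
      ≤ (stdGauss T).toReal := by
  rw [Measure.map_apply hf hs]
  have h1 : stdGauss (f ⁻¹' s) ≤ stdGauss s + stdGauss T := by
    refine le_trans (measure_mono ?_) (measure_union_le _ _)
    intro z hz
    by_cases hzT : z ∈ T
    · exact Or.inr hzT
    · exact Or.inl (by simpa only [mem_preimage, hT z hzT] using hz)
  have h2 : stdGauss s ≤ stdGauss (f ⁻¹' s) + stdGauss T := by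
    refine le_trans (measure_mono ?_) (measure_union_le _ _)
    intro z hz
    by_cases hzT : z ∈ T
    · exact Or.inr hzT
    · exact Or.inl (by simp only [mem_preimage, hT z hzT]; exact hz)
  have fin1 : stdGauss (f ⁻¹' s) ≠ ⊤ := measure_ne_top _ _
  have fin2 : stdGauss s ≠ ⊤ := measure_ne_top _ _
  have fin3 : stdGauss T ≠ ⊤ := measure_ne_top _ _
  rw [abs_sub_le_iff]
  constructor
  · have := ENNReal.toReal_mono (by finiteness) h1
    rw [ENNReal.toReal_add fin2 fin3] at this
    linarith
  · have := ENNReal.toReal_mono (by finiteness) h2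
    rw [ENNReal.toReal_add fin1 fin3] at this
    linarith

theorem stmt_16 (η θ : ℕ → ℝ) (hηpos : ∀ n, 0 < η n) (ζ : ℝ) (hζ : 1 < |ζ|)
    (hη0 : Tendsto η atTop (𝓝 0))
    (hηe : Tendsto (fun n : ℕ => Real.sqrt n * η n) atTop atTop)
    (hθζ : Tendsto (fun n => θ n / η n) atTop (𝓝 ζ)) :
    Tendsto (fun n : ℕ => ⨆ (s : Set ℝ) (_ : MeasurableSet s),
        |((Measure.map (fun z => Real.sqrt n * (hardThresh (η n) (θ n + z / Real.sqrt n) - θ n))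
            stdGauss) s).toReal - (stdGauss s).toReal|)
      atTop (𝓝 0) := by
  set c : ℝ := (|ζ| - 1) / 2 with hc
  have hcpos : 0 < c := by rw [hc]; linarith
  set t : ℕ → ℝ := fun n => c * (Real.sqrt n * η n) with htdef
  have ht : Tendsto t atTop atTop := hηe.const_mul_atTop hcpos
  -- eventually |θ n| > ((1+|ζ|)/2) * η n
  have habs : Tendsto (fun n => |θ n / η n|) atTop (𝓝 |ζ|) := hθζ.abs
  have hev : ∀ᶠ n in atTop, (1 + |ζ|) / 2 < |θ n / η n| :=
    habs.eventually (eventually_gt_nhds (by linarith))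
  -- eventually the map is id off T n
  have key : ∀ᶠ n in atTop, ∀ z : ℝ, z ∉ {z : ℝ | t n ≤ |z|} →
      Real.sqrt n * (hardThresh (η n) (θ n + z / Real.sqrt n) - θ n) = z := by
    filter_upwards [hev, eventually_ge_atTop 1] with n hn hn1
    intro z hz
    simp only [mem_setOf_eq, not_le] at hz
    have hsn : (0:ℝ) < Real.sqrt n := Real.sqrt_pos.2 (by exact_mod_cast hn1)
    have hθn : (1 + |ζ|) / 2 * η n < |θ n| := by
      rw [abs_div, abs_of_pos (hηpos n)] at hn
      exact (lt_div_iff₀ (hηpos n)).1 hn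
    have h1 : |z / Real.sqrt n| < c * η n := by
      rw [abs_div, abs_of_pos hsn, div_lt_iff₀ hsn]
      calc |z| < c * (Real.sqrt n * η n) := hz
        _ = c * η n * Real.sqrt n := by ring
    have h2 : |θ n| - |z / Real.sqrt n| ≤ |θ n + z / Real.sqrt n| := by
      have h3 := abs_sub_abs_le_abs_sub (θ n) (-(z / Real.sqrt n))
      simp only [abs_neg, sub_neg_eq_add] at h3
      linarith
    have hbig : η n < |θ n + z / Real.sqrt n| := by
      have hceq : ((1 + |ζ|) / 2 - c) * η n = η n := by rw [hc]; ring
      linarith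
    rw [show hardThresh (η n) (θ n + z / Real.sqrt n) = θ n + z / Real.sqrt n by
      unfold hardThresh; exact if_pos hbig]
    field_simp
    ring
  -- squeeze
  have upper : ∀ᶠ n : ℕ in atTop,
      (⨆ (s : Set ℝ) (_ : MeasurableSet s),
        |((Measure.map (fun z => Real.sqrt n * (hardThresh (η n) (θ n + z / Real.sqrt n) - θ n))
            stdGauss) s).toReal - (stdGauss s).toReal|)
        ≤ (stdGauss {z : ℝ | t n ≤ |z|}).toReal := by
    filter_upwards [key] with n hn
    have hmeas : Measurable (fun z : ℝ =>
        Real.sqrt n * (hardThresh (η n) (θ n + z / Real.sqrt n) - θ n)) :=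
      (((hardThresh_measurable (η n)).comp
        (measurable_const.add (measurable_id.div_const _))).sub measurable_const).const_mul _
    refine Real.iSup_le (fun s => Real.iSup_le (fun hs => ?_) ENNReal.toReal_nonneg)
      ENNReal.toReal_nonneg
    exact tv_bound hmeas hn hs
  have lower : ∀ n : ℕ, (0:ℝ) ≤ ⨆ (s : Set ℝ) (_ : MeasurableSet s),
      |((Measure.map (fun z => Real.sqrt n * (hardThresh (η n) (θ n + z / Real.sqrt n) - θ n))
          stdGauss) s).toReal - (stdGauss s).toReal| :=
    fun n => Real.iSup_nonneg (fun s => Real.iSup_nonneg (fun _ => abs_nonneg _))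
  exact tendsto_of_tendsto_of_tendsto_of_le_of_le' tendsto_const_nhds (gauss_tail ht)
    (Eventually.of_forall lower) upper
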